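/- (Proposition 2, essentiality criterion.) Let N be a finite set of voters and S = (S_1,…,S_K), with K ≥ 2, a sequence of nonempty, pairwise distinct subsets of N with S_K a singleton. Suppose that for every k ∈ {1,…,K−1} there exists a subset C ⊆ N such that: S_k ⊆ C; for every l < k, S_l ∩ C ≠ ∅ and S_l is not a subset of C; and for every l with k < l ≤ K, S_l is not a subset of C. (Outputs of Algorithm 1 satisfying the extra condition 2(iv) have this property.) Then the sequential unanimity rule 𝒮 associated with S is essential: for every k ∈ {1,…,K−1} there exists a profile R at which 𝒮 differs from the sequential unanimity rule associated with (S_1,…,S_{k−1},S_{k+1},…,S_K). -/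
import Mathlib


/-- A rule is strategy-proof if whenever a voter's misreport would give his true
preference, truthful reporting gives it as well. -/
def StrategyProof {N : Type*} [DecidableEq N] (f : (N → Bool) → Bool) : Prop :=
  ∀ (R : N → Bool) (i : N) (b : Bool), f (Function.update R i b) = R i → f R = R i

/-- A rule is neutral if it commutes with flipping the two candidates. -/
def Neutral {N : Type*} (f : (N → Bool) → Bool) : Prop :=
  ∀ R : N → Bool, f (fun i => !(R i)) = !(f R)

/-- An M-winning coalition set: nonempty, members nonempty, minimality (P1),
and Moulin's property (P2). -/
def IsMWCS {N : Type*} [DecidableEq N] (𝒞 : Set (Finset N)) : Prop :=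
  𝒞.Nonempty ∧ (∀ C ∈ 𝒞, C.Nonempty) ∧
    (∀ C ∈ 𝒞, ∀ C' ∈ 𝒞, C ⊆ C' → C = C') ∧
    (∀ C : Finset N, (∃ C' ∈ 𝒞, C' ⊆ C) ↔ ∀ C'' ∈ 𝒞, (C ∩ C'').Nonempty)

/-- `f` is the M-winning coalition rule associated with `𝒞`. -/
def IsMWCRule {N : Type*} (𝒞 : Set (Finset N)) (f : (N → Bool) → Bool) : Prop :=
  ∀ (R : N → Bool) (x : Bool), f R = x ↔ ∃ C ∈ 𝒞, ∀ i ∈ C, R i = x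

/-- `g` is the sequential unanimity rule associated with the sequence `S`. -/
def IsSURule {N : Type*} {K : ℕ} (S : Fin K → Finset N) (g : (N → Bool) → Bool) : Prop :=
  ∀ (R : N → Bool) (x : Bool),
    g R = x ↔ ∃ k : Fin K, (∀ i ∈ S k, R i = x) ∧
      ∀ l < k, ∃ i ∈ S l, ∃ j ∈ S l, R i ≠ R j

/-- Proposition 2 (essentiality criterion): if for every non-final index k there is a
coalition C containing S_k, meeting but not containing every earlier term, and not
containing any later term, then the sequential unanimity rule associated with S is
essential: deleting any non-final term changes the rule at some profile. -/
theorem stmt10 {N : Type*} [Fintype N] [DecidableEq N] {K : ℕ} (S : Fin (K + 2) → Finset N)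
    (hne : ∀ k, (S k).Nonempty) (hinj : Function.Injective S)
    (hlast : (S (Fin.last (K + 1))).card = 1)
    (hcond : ∀ k : Fin (K + 2), k ≠ Fin.last (K + 1) →
      ∃ C : Finset N, S k ⊆ C ∧ (∀ l < k, (S l ∩ C).Nonempty ∧ ¬ S l ⊆ C) ∧
        (∀ l : Fin (K + 2), k < l → ¬ S l ⊆ C))
    (g : (N → Bool) → Bool) (hg : IsSURule S g) :
    ∀ k : Fin (K + 2), k ≠ Fin.last (K + 1) →
      ∀ g' : (N → Bool) → Bool, IsSURule (fun l : Fin (K + 1) => S (k.succAbove l)) g' →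
        ∃ R : N → Bool, g R ≠ g' R := by
  intro k hk g' hg'
  obtain ⟨C, hSC, hlt, hgt⟩ := hcond k hk
  set R : N → Bool := fun i => decide (i ∈ C) with hR
  refine ⟨R, ?_⟩
  have hgR : g R = true := by
    refine (hg R true).mpr ⟨k, ?_, ?_⟩
    · intro i hi
      simp [hR, hSC hi]
    · intro l hl
      obtain ⟨hmeet, hnsub⟩ := hlt l hl
      obtain ⟨i, hi⟩ := hmeet
      simp only [Finset.mem_inter] at hi
      obtain ⟨j, hj, hjC⟩ := Finset.not_subset.mp hnsub
      exact ⟨i, hi.1, j, hj, by simp [hR, hi.2, hjC]⟩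
  have hg'R : g' R ≠ true := by
    intro h
    obtain ⟨m, hall, -⟩ := (hg' R true).mp h
    have hsub : S (k.succAbove m) ⊆ C := by
      intro i hi
      have := hall i hi
      simpa [hR] using this
    rcases lt_or_gt_of_ne (k.succAbove_ne m) with h1 | h1
    · exact (hlt _ h1).2 hsub
    · exact hgt _ h1 hsub
  rw [hgR]
  exact fun h => hg'R h.symm
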